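/- Let δ = x₂ ∂/∂x₁ + x₄ ∂/∂x₃ act on the field of rational functions ℂ(x₁, x₂, x₃, x₄). If J is a rational function with δJ = 0 and ∂J/∂x₁ ≠ 0 or ∂J/∂x₃ ≠ 0, then J can be written as a rational function of Y₁ = x₂, Y₂ = x₄, Y₃ = x₄x₁ − x₂x₃ which genuinely depends on Y₃ (i.e., ∂/∂Y₃ of this representation is nonzero). -/

import Mathlib

open MvPolynomial

/-- The derivation δ = x₂ ∂/∂x₁ + x₄ ∂/∂x₃ on polynomials in x₁,…,x₄
(variables indexed 0,…,3). -/
noncomputable def deltaOp (p : MvPolynomial (Fin 4) ℂ) : MvPolynomial (Fin 4) ℂ :=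
  X 1 * pderiv 0 p + X 3 * pderiv 2 p

/-- Substitution of Y₁ = x₂, Y₂ = x₄, Y₃ = x₄x₁ − x₂x₃ into a rational expression
in three variables, at the level of polynomials. -/
noncomputable def subY : MvPolynomial (Fin 3) ℂ →ₐ[ℂ] MvPolynomial (Fin 4) ℂ :=
  aeval ![X 1, X 3, X 3 * X 0 - X 1 * X 2]

/-! ### Auxiliary machinery -/

/-- The change of coordinates z₀ ↦ x₁, z₁ ↦ x₂, z₂ ↦ x₄, z₃ ↦ Y₃ = x₄x₁ − x₂x₃. -/
noncomputable def ThetaAux : MvPolynomial (Fin 4) ℂ →ₐ[ℂ] MvPolynomial (Fin 4) ℂ :=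
  aeval ![X 0, X 1, X 3, X 3 * X 0 - X 1 * X 2]

lemma ThetaAux_rename (p : MvPolynomial (Fin 3) ℂ) :
    ThetaAux (rename Fin.succ p) = subY p := by
  rw [ThetaAux, subY, aeval_rename]
  have h : (![(X 0 : MvPolynomial (Fin 4) ℂ), X 1, X 3, X 3 * X 0 - X 1 * X 2] ∘ Fin.succ)
      = ![X 1, X 3, X 3 * X 0 - X 1 * X 2] := by
    funext i; fin_cases i <;> rfl
  rw [h]

lemma ThetaAux_injective : Function.Injective ThetaAux := by
  set K := FractionRing (MvPolynomial (Fin 4) ℂ)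
  let ι : MvPolynomial (Fin 4) ℂ →+* K := algebraMap _ _
  have hι : Function.Injective ι := IsFractionRing.injective _ _
  have hX1 : ι (X 1) ≠ 0 := by
    intro h
    exact X_ne_zero (1 : Fin 4) (hι (by simpa using h))
  let σ : MvPolynomial (Fin 4) ℂ →ₐ[ℂ] K :=
    aeval ![ι (X 0), ι (X 1), (ι (X 2) * ι (X 0) - ι (X 3)) / ι (X 1), ι (X 2)]
  have key : ∀ p, σ (ThetaAux p) = ι p := by
    intro p
    have : (σ.comp ThetaAux) = (IsScalarTower.toAlgHom ℂ (MvPolynomial (Fin 4) ℂ) K) := by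
      apply MvPolynomial.algHom_ext
      intro i
      fin_cases i <;>
        (simp [σ, ThetaAux, ι]; try rw [mul_div_cancel₀ _ hX1, sub_sub_cancel])
    exact DFunLike.congr_fun this p
  intro p q h
  apply hι
  rw [← key p, ← key q, h]

lemma subY_injective : Function.Injective subY := by
  intro p q h
  have h2 : ThetaAux (rename Fin.succ p) = ThetaAux (rename Fin.succ q) := by
    rw [ThetaAux_rename, ThetaAux_rename, h]
  exact rename_injective Fin.succ (Fin.succ_injective 3) (ThetaAux_injective h2)

lemma deltaOp_mul (p q : MvPolynomial (Fin 4) ℂ) :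
    deltaOp (p * q) = deltaOp p * q + p * deltaOp q := by
  simp only [deltaOp, pderiv_mul]; ring

lemma deltaOp_X1 : deltaOp (X 1) = 0 := by
  simp [deltaOp, pderiv_X_self, pderiv_X_of_ne, pderiv_X]

lemma deltaOp_X1_pow_mul (n : ℕ) (p : MvPolynomial (Fin 4) ℂ) :
    deltaOp (X 1 ^ n * p) = X 1 ^ n * deltaOp p := by
  induction n with
  | zero => simp
  | succ n ih =>
    have : (X 1 : MvPolynomial (Fin 4) ℂ) ^ (n + 1) * p = X 1 * (X 1 ^ n * p) := by ring
    rw [this, deltaOp_mul, deltaOp_X1, ih]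
    ring

lemma claimA (p : MvPolynomial (Fin 4) ℂ) :
    ∃ (n : ℕ) (q : MvPolynomial (Fin 4) ℂ), X 1 ^ n * p = ThetaAux q := by
  induction p using MvPolynomial.induction_on with
  | C a => exact ⟨0, C a, by simp⟩
  | add p q hp hq =>
    obtain ⟨n, qp, hp⟩ := hp
    obtain ⟨m, qq, hq⟩ := hq
    refine ⟨n + m, (X 1) ^ m * qp + (X 1) ^ n * qq, ?_⟩
    have hX1 : ThetaAux (X 1) = X 1 := by simp [ThetaAux]
    rw [map_add, map_mul, map_mul, map_pow, map_pow, hX1, ← hp, ← hq]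
    ring
  | mul_X p i hp =>
    obtain ⟨n, q, hq⟩ := hp
    have base : ∃ (m : ℕ) (r : MvPolynomial (Fin 4) ℂ),
        (X 1 : MvPolynomial (Fin 4) ℂ) ^ m * X i = ThetaAux r := by
      fin_cases i
      · exact ⟨0, X 0, by simp [ThetaAux]⟩
      · exact ⟨0, X 1, by simp [ThetaAux]⟩
      · exact ⟨1, X 2 * X 0 - X 3, by simp [ThetaAux]⟩
      · exact ⟨0, X 2, by simp [ThetaAux]⟩
    obtain ⟨m, r, hr⟩ := base
    refine ⟨n + m, q * r, ?_⟩
    rw [map_mul, ← hq, ← hr]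
    ring

lemma deltaOp_ThetaAux (q : MvPolynomial (Fin 4) ℂ) :
    deltaOp (ThetaAux q) = X 1 * ThetaAux (pderiv 0 q) := by
  induction q using MvPolynomial.induction_on with
  | C a => simp [ThetaAux, deltaOp]
  | add p q hp hq =>
    simp only [map_add, deltaOp] at *
    linear_combination hp + hq
  | mul_X p i hp =>
    have base : deltaOp (ThetaAux (X i)) = X 1 * ThetaAux (pderiv 0 (X i)) := by
      fin_cases i <;>
        (simp [ThetaAux, deltaOp, pderiv_X_self, pderiv_X_of_ne, pderiv_X]; try ring)
    rw [map_mul, deltaOp_mul, hp, base, pderiv_mul, map_add, map_mul, map_mul]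
    ring

lemma finSuccEquiv_pderiv0 (p : MvPolynomial (Fin 4) ℂ) :
    finSuccEquiv ℂ 3 (pderiv 0 p) = Polynomial.derivative (finSuccEquiv ℂ 3 p) := by
  induction p using MvPolynomial.induction_on with
  | C a => simp [finSuccEquiv_apply]
  | add p q hp hq => simp [hp, hq]
  | mul_X p i hp =>
    have base : finSuccEquiv ℂ 3 (pderiv 0 (X i))
        = Polynomial.derivative (finSuccEquiv ℂ 3 (X i)) := by
      rcases Fin.eq_zero_or_eq_succ i with h | ⟨j, h⟩
      · subst h; simp [finSuccEquiv_X_zero, pderiv_X_self]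
      · subst h
        rw [finSuccEquiv_X_succ, pderiv_X_of_ne (by simp [Fin.succ_ne_zero])]
        simp
    rw [pderiv_mul, map_add, map_mul, map_mul, hp, base, map_mul,
      Polynomial.derivative_mul]

lemma finSuccEquiv_rename_succ (p : MvPolynomial (Fin 3) ℂ) :
    finSuccEquiv ℂ 3 (rename Fin.succ p) = Polynomial.C p := by
  induction p using MvPolynomial.induction_on with
  | C a =>
    rw [rename_C]
    simp [finSuccEquiv_apply]
  | add p q hp hq => simp [hp, hq]
  | mul_X p i hp => rw [map_mul, map_mul, hp, rename_X, finSuccEquiv_X_succ, Polynomial.C_mul]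

open Polynomial in
lemma univar_const {L : Type*} [Field L] [CharZero L] (p q : L[X]) (hq : q ≠ 0)
    (h : derivative p * q = p * derivative q) : ∃ c : L, p = Polynomial.C c * q := by
  classical
  set d := GCDMonoid.gcd p q with hd
  have hd0 : d ≠ 0 := gcd_ne_zero_of_right hq
  obtain ⟨p₁, hp₁⟩ : d ∣ p := gcd_dvd_left p q
  obtain ⟨q₁, hq₁⟩ : d ∣ q := gcd_dvd_right p q
  have hq₁0 : q₁ ≠ 0 := by rintro rfl; simp at hq₁; exact hq hq₁
  have hcop : IsCoprime p₁ q₁ := by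
    have := isCoprime_div_gcd_div_gcd (p := p) (q := q) hq
    have e1 : p / d = p₁ := by rw [hp₁]; exact mul_div_cancel_left₀ p₁ hd0
    have e2 : q / d = q₁ := by rw [hq₁]; exact mul_div_cancel_left₀ q₁ hd0
    rwa [← hd, e1, e2] at this
  have key : derivative p₁ * q₁ = p₁ * derivative q₁ := by
    have expand : d * d * (derivative p₁ * q₁) = d * d * (p₁ * derivative q₁) := by
      have := h
      rw [hp₁, hq₁, derivative_mul, derivative_mul] at this
      ring_nf at this ⊢
      linear_combination this
    exact mul_left_cancel₀ (mul_ne_zero hd0 hd0) expand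
  have hder : ∀ r s : L[X], IsCoprime r s → derivative r * s = r * derivative s →
      derivative r = 0 := by
    intro r s hco hrs
    have hdvd : r ∣ derivative r * s := ⟨derivative s, hrs⟩
    have hdvd' : r ∣ derivative r := hco.dvd_of_dvd_mul_right hdvd
    by_contra hne
    have hr0 : r.natDegree ≠ 0 := by
      intro h0
      rw [Polynomial.eq_C_of_natDegree_eq_zero h0] at hne
      simp at hne
    have h1 : r.natDegree ≤ (derivative r).natDegree :=
      Polynomial.natDegree_le_of_dvd hdvd' hne
    exact absurd (lt_of_le_of_lt h1 (Polynomial.natDegree_derivative_lt hr0)) (lt_irrefl _)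
  have hp₁' : derivative p₁ = 0 := hder p₁ q₁ hcop key
  have hq₁' : derivative q₁ = 0 := by
    refine hder q₁ p₁ hcop.symm ?_
    linear_combination -key
  obtain ⟨a, ha⟩ : ∃ a, p₁ = Polynomial.C a :=
    ⟨_, Polynomial.eq_C_of_natDegree_eq_zero
      (Polynomial.natDegree_eq_zero_of_derivative_eq_zero hp₁')⟩
  obtain ⟨b, hb⟩ : ∃ b, q₁ = Polynomial.C b :=
    ⟨_, Polynomial.eq_C_of_natDegree_eq_zero
      (Polynomial.natDegree_eq_zero_of_derivative_eq_zero hq₁')⟩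
  have hb0 : b ≠ 0 := by rintro rfl; simp at hb; exact hq₁0 hb
  refine ⟨a / b, ?_⟩
  have hab : (a / b) * b = a := div_mul_cancel₀ a hb0
  rw [hp₁, ha, hq₁, hb]
  calc d * Polynomial.C a = d * Polynomial.C ((a / b) * b) := by rw [hab]
    _ = Polynomial.C (a / b) * (d * Polynomial.C b) := by rw [Polynomial.C_mul]; ring

/-- Main algebraic step: if F,G are polynomials in the z-coordinates with
∂₀F·G = F·∂₀G, then F/G is independent of z₀. -/
lemma main_step (F G : MvPolynomial (Fin 4) ℂ) (hG : G ≠ 0)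
    (h : pderiv 0 F * G = F * pderiv 0 G) :
    ∃ u v : MvPolynomial (Fin 3) ℂ, v ≠ 0 ∧
      F * rename Fin.succ v = G * rename Fin.succ u := by
  classical
  set e := MvPolynomial.finSuccEquiv ℂ 3
  set S := MvPolynomial (Fin 3) ℂ
  set L := FractionRing S
  let ι : S →+* L := algebraMap S L
  have hιinj : Function.Injective ι := IsFractionRing.injective _ _
  haveI : CharZero L := charZero_of_injective_algebraMap hιinj
  set P := e F with hP
  set Q := e G with hQ
  have hQ0 : Q ≠ 0 := by
    intro h0
    exact hG (by simpa [hQ, e] using h0)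
  -- the derivative relation in Polynomial S
  have hPS : Polynomial.derivative P * Q = P * Polynomial.derivative Q := by
    have := congrArg e h
    rw [map_mul, map_mul, finSuccEquiv_pderiv0, finSuccEquiv_pderiv0] at this
    exact this
  -- move to Polynomial L
  have hmapinj : Function.Injective (Polynomial.map ι) := Polynomial.map_injective ι hιinj
  have hQL : Q.map ι ≠ 0 := by
    intro h0
    exact hQ0 (hmapinj (by simpa using h0))
  have hPL : Polynomial.derivative (P.map ι) * Q.map ι
      = P.map ι * Polynomial.derivative (Q.map ι) := by
    rw [Polynomial.derivative_map, Polynomial.derivative_map, ← Polynomial.map_mul,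
      ← Polynomial.map_mul, hPS]
  obtain ⟨c, hc⟩ := univar_const (P.map ι) (Q.map ι) hQL hPL
  obtain ⟨a, b, hbmem, hab⟩ := IsFractionRing.div_surjective (A := S) c
  have hb0 : b ≠ 0 := nonZeroDivisors.ne_zero hbmem
  have hιb0 : ι b ≠ 0 := fun h0 => hb0 (hιinj (by simpa using h0))
  -- clear denominators: P * C b = Q * C a in Polynomial S
  have hPQ : P * Polynomial.C b = Q * Polynomial.C a := by
    apply hmapinj
    rw [Polynomial.map_mul, Polynomial.map_mul, Polynomial.map_C, Polynomial.map_C]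
    rw [hc]
    have : c * ι b = ι a := by
      rw [← hab]; exact div_mul_cancel₀ _ hιb0
    calc Polynomial.C c * Polynomial.map ι Q * Polynomial.C (ι b)
        = Polynomial.map ι Q * Polynomial.C (c * ι b) := by rw [Polynomial.C_mul]; ring
      _ = Polynomial.map ι Q * Polynomial.C (ι a) := by rw [this]
  refine ⟨a, b, hb0, ?_⟩
  apply e.injective
  rw [map_mul, map_mul, finSuccEquiv_rename_succ, finSuccEquiv_rename_succ]
  exact hPQ

lemma pderiv0_subY (p : MvPolynomial (Fin 3) ℂ) :
    pderiv 0 (subY p) = X 3 * subY (pderiv 2 p) := by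
  induction p using MvPolynomial.induction_on with
  | C a => simp [subY]
  | add p q hp hq => simp only [map_add]; rw [hp, hq]; ring
  | mul_X p i hp =>
    have base : ∀ j : Fin 3, pderiv 0 (subY (X j)) = X 3 * subY (pderiv 2 (X j)) := by
      intro j
      fin_cases j <;>
        (simp [subY, pderiv_X_self, pderiv_X_of_ne, pderiv_X]; try ring)
    rw [map_mul, pderiv_mul, hp, base, pderiv_mul, map_add, map_mul, map_mul]
    ring

lemma pderiv2_subY (p : MvPolynomial (Fin 3) ℂ) :
    pderiv 2 (subY p) = -X 1 * subY (pderiv 2 p) := by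
  induction p using MvPolynomial.induction_on with
  | C a => simp [subY]
  | add p q hp hq => simp only [map_add]; rw [hp, hq]; ring
  | mul_X p i hp =>
    have base : ∀ j : Fin 3, pderiv 2 (subY (X j)) = -X 1 * subY (pderiv 2 (X j)) := by
      intro j
      fin_cases j <;>
        (simp [subY, pderiv_X_self, pderiv_X_of_ne, pderiv_X]; try ring)
    rw [map_mul, pderiv_mul, hp, base, pderiv_mul, map_add, map_mul, map_mul]
    ring

theorem stmt_18 (f g : MvPolynomial (Fin 4) ℂ) (hg : g ≠ 0)
    -- J = f/g satisfies δJ = 0 (quotient rule form):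
    (hδ : deltaOp f * g - f * deltaOp g = 0)
    -- ∂J/∂x₁ ≠ 0 or ∂J/∂x₃ ≠ 0:
    (hdep : pderiv 0 f * g - f * pderiv 0 g ≠ 0 ∨ pderiv 2 f * g - f * pderiv 2 g ≠ 0) :
    -- J = K(Y₁,Y₂,Y₃) for a rational function K = u/v which genuinely depends on Y₃:
    ∃ u v : MvPolynomial (Fin 3) ℂ, v ≠ 0 ∧ subY v ≠ 0 ∧
      f * subY v = g * subY u ∧
      pderiv 2 u * v - u * pderiv 2 v ≠ 0 := by
  classical
  have hδ' : deltaOp f * g = f * deltaOp g := sub_eq_zero.mp hδ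
  have hX1 : (X 1 : MvPolynomial (Fin 4) ℂ) ≠ 0 := X_ne_zero 1
  obtain ⟨n₁, F₁, hF₁⟩ := claimA f
  obtain ⟨n₂, G₁, hG₁⟩ := claimA g
  set N := n₁ + n₂ with hN
  have hXN : (X 1 : MvPolynomial (Fin 4) ℂ) ^ N ≠ 0 := pow_ne_zero _ hX1
  set F : MvPolynomial (Fin 4) ℂ := X 1 ^ n₂ * F₁ with hFdef
  set G : MvPolynomial (Fin 4) ℂ := X 1 ^ n₁ * G₁ with hGdef
  have hTX1 : ThetaAux (X 1) = X 1 := by simp [ThetaAux]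
  have hF : X 1 ^ N * f = ThetaAux F := by
    rw [hFdef, map_mul, map_pow, hTX1, ← hF₁, hN, pow_add]
    ring
  have hG : X 1 ^ N * g = ThetaAux G := by
    rw [hGdef, map_mul, map_pow, hTX1, ← hG₁, hN, pow_add]
    ring
  clear_value F G
  have hGne : G ≠ 0 := by
    intro h0
    apply hg
    have : X 1 ^ N * g = 0 := by rw [hG, h0, map_zero]
    exact (mul_eq_zero.mp this).resolve_left hXN
  -- the PDE in the new coordinates
  have key : pderiv 0 F * G = F * pderiv 0 G := by
    have h1 : deltaOp (ThetaAux F) = X 1 ^ N * deltaOp f := by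
      rw [← hF, deltaOp_X1_pow_mul]
    have h2 : deltaOp (ThetaAux G) = X 1 ^ N * deltaOp g := by
      rw [← hG, deltaOp_X1_pow_mul]
    have h3 : X 1 * ThetaAux (pderiv 0 F * G - F * pderiv 0 G) = 0 := by
      simp only [map_sub, map_mul]
      calc X 1 * (ThetaAux (pderiv 0 F) * ThetaAux G - ThetaAux F * ThetaAux (pderiv 0 G))
          = deltaOp (ThetaAux F) * ThetaAux G - ThetaAux F * deltaOp (ThetaAux G) := by
            rw [deltaOp_ThetaAux, deltaOp_ThetaAux]; ring
        _ = (X 1 ^ N * deltaOp f) * (X 1 ^ N * g) - (X 1 ^ N * f) * (X 1 ^ N * deltaOp g) := by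
            rw [h1, h2, ← hF, ← hG]
        _ = X 1 ^ N * X 1 ^ N * (deltaOp f * g - f * deltaOp g) := by ring
        _ = 0 := by rw [hδ]; ring
    have h4 : ThetaAux (pderiv 0 F * G - F * pderiv 0 G) = 0 :=
      (mul_eq_zero.mp h3).resolve_left hX1
    have h5 : pderiv 0 F * G - F * pderiv 0 G = 0 := by
      apply ThetaAux_injective
      rw [h4, map_zero]
    exact sub_eq_zero.mp h5
  obtain ⟨u, v, hv0, huv⟩ := main_step F G hGne key
  have hfv : f * subY v = g * subY u := by
    have h6 := congrArg ThetaAux huv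
    simp only [map_mul, ThetaAux_rename] at h6
    rw [← hF, ← hG] at h6
    apply mul_left_cancel₀ hXN
    linear_combination h6
  have hsv : subY v ≠ 0 := by
    intro h0
    apply hv0
    apply subY_injective
    rw [h0, map_zero]
  refine ⟨u, v, hv0, hsv, hfv, ?_⟩
  intro hW
  have hW' : subY (pderiv 2 u) * subY v = subY u * subY (pderiv 2 v) := by
    have h7 := congrArg subY (sub_eq_zero.mp hW)
    rw [map_mul, map_mul] at h7
    exact h7
  have hii : g * subY (pderiv 2 u) = f * subY (pderiv 2 v) := by
    have h8 : (g * subY (pderiv 2 u) - f * subY (pderiv 2 v)) * subY v = 0 := by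
      linear_combination g * hW' - subY (pderiv 2 v) * hfv
    exact sub_eq_zero.mp ((mul_eq_zero.mp h8).resolve_right hsv)
  have hd0 : pderiv 0 f * g - f * pderiv 0 g = 0 := by
    have hdiff := congrArg (pderiv 0) hfv
    rw [pderiv_mul, pderiv_mul, pderiv0_subY, pderiv0_subY] at hdiff
    have h9 : (pderiv 0 f * g - f * pderiv 0 g) * subY v = 0 := by
      linear_combination g * hdiff - pderiv 0 g * hfv + g * X 3 * hii
    exact (mul_eq_zero.mp h9).resolve_right hsv
  have hd2 : pderiv 2 f * g - f * pderiv 2 g = 0 := by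
    have hdiff := congrArg (pderiv 2) hfv
    rw [pderiv_mul, pderiv_mul, pderiv2_subY, pderiv2_subY] at hdiff
    have h9 : (pderiv 2 f * g - f * pderiv 2 g) * subY v = 0 := by
      linear_combination g * hdiff - pderiv 2 g * hfv - g * X 1 * hii
    exact (mul_eq_zero.mp h9).resolve_right hsv
  rcases hdep with h | h
  · exact h hd0
  · exact h hd2
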